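/- Let p be an odd prime and let F = ZMod p. Let SL_2(F) act on the polynomial ring F[x,y] by linear substitutions on the variables x, y. Then the polynomials q = x^{p^2-p} + y^{p-1}·(x^{p-1} - y^{p-1})^{p-1} and r = x·y·(x^{p-1} - y^{p-1}) are invariant under this SL_2(F)-action. -/

import Mathlib

open MvPolynomial

theorem stmt_10 (p : ℕ) (hp : p.Prime) (hodd : Odd p)
    (q r : MvPolynomial (Fin 2) (ZMod p))
    (hq : q = X 0 ^ (p ^ 2 - p) + X 1 ^ (p - 1) * (X 0 ^ (p - 1) - X 1 ^ (p - 1)) ^ (p - 1))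
    (hr : r = X 0 * X 1 * (X 0 ^ (p - 1) - X 1 ^ (p - 1)))
    (g : Matrix.SpecialLinearGroup (Fin 2) (ZMod p)) :
    aeval (fun i : Fin 2 => ∑ j : Fin 2, C ((g : Matrix (Fin 2) (Fin 2) (ZMod p)) j i) * X j) q = q ∧
    aeval (fun i : Fin 2 => ∑ j : Fin 2, C ((g : Matrix (Fin 2) (Fin 2) (ZMod p)) j i) * X j) r = r := by
  haveI : Fact p.Prime := ⟨hp⟩
  obtain ⟨m, hm⟩ : ∃ m, p = m + 1 := ⟨p - 1, (Nat.succ_pred_eq_of_pos hp.pos).symm⟩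
  have hm1 : p - 1 = m := by omega
  set A : Matrix (Fin 2) (Fin 2) (ZMod p) := (g : Matrix (Fin 2) (Fin 2) (ZMod p)) with hA
  set f : Fin 2 → MvPolynomial (Fin 2) (ZMod p) := fun i => ∑ j : Fin 2, C (A j i) * X j with hf
  -- determinant
  have hdet : A 0 0 * A 1 1 - A 1 0 * A 0 1 = 1 := by
    have h := g.prop
    rw [Matrix.det_fin_two] at h
    linear_combination h
  have hdetC : C (A 0 0) * C (A 1 1) - C (A 1 0) * C (A 0 1)
      = (1 : MvPolynomial (Fin 2) (ZMod p)) := by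
    rw [← C_mul, ← C_mul, ← C_sub, hdet, C_1]
  -- images of variables
  have hφ0 : aeval (R := ZMod p) f (X 0) = C (A 0 0) * X 0 + C (A 1 0) * X 1 := by
    simp [hf, Fin.sum_univ_two]
  have hφ1 : aeval (R := ZMod p) f (X 1) = C (A 0 1) * X 0 + C (A 1 1) * X 1 := by
    simp [hf, Fin.sum_univ_two]
  -- Frobenius
  have frob : ∀ (u v : ZMod p) (s t : MvPolynomial (Fin 2) (ZMod p)),
      (C u * s + C v * t) ^ p = C u * s ^ p + C v * t ^ p := by
    intro u v s t
    rw [add_pow_char, mul_pow, mul_pow, ← C_pow, ZMod.pow_card, ← C_pow, ZMod.pow_card]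
  have frob2 : ∀ (u v : ZMod p),
      (C u * X 0 + C v * X 1 : MvPolynomial (Fin 2) (ZMod p)) ^ (p * p)
        = C u * X 0 ^ (p * p) + C v * X 1 ^ (p * p) := by
    intro u v
    rw [pow_mul, frob, frob, ← pow_mul, ← pow_mul]
  -- rewrite r
  have hr' : r = X 0 ^ p * X 1 - X 0 * X 1 ^ p := by
    rw [hr, hm1, show (X 0 : MvPolynomial (Fin 2) (ZMod p)) ^ p = X 0 ^ (m + 1) by rw [← hm],
      show (X 1 : MvPolynomial (Fin 2) (ZMod p)) ^ p = X 1 ^ (m + 1) by rw [← hm]]; ring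
  -- key product identity
  have hrq : r * q = X 0 ^ (p * p) * X 1 - X 0 * X 1 ^ (p * p) := by
    have h2 : p ^ 2 - p = p * m := by
      rw [hm, pow_two, Nat.mul_succ, Nat.add_sub_cancel]
    have hpp : p * p = p * m + m + 1 := by rw [hm]; ring
    have hs : ((X 0 : MvPolynomial (Fin 2) (ZMod p)) ^ m - X 1 ^ m) ^ (m + 1)
        = X 0 ^ (p * m) - X 1 ^ (p * m) := by
      rw [← hm, sub_pow_char, ← pow_mul, ← pow_mul, mul_comm m p]
    rw [hr, hq, hm1, h2, hpp]
    linear_combination (X 0 * X 1 ^ (m + 1)) * hs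
  -- invariance of r
  have hφr : aeval (R := ZMod p) f r = r := by
    rw [hr', map_sub, map_mul, map_mul, map_pow, map_pow, hφ0, hφ1, frob, frob]
    linear_combination (X 0 ^ p * X 1 - X 0 * X 1 ^ p) * hdetC
  -- invariance of the big poly
  have hφw : aeval (R := ZMod p) f (X 0 ^ (p * p) * X 1 - X 0 * X 1 ^ (p * p))
      = X 0 ^ (p * p) * X 1 - X 0 * X 1 ^ (p * p) := by
    rw [map_sub, map_mul, map_mul, map_pow, map_pow, hφ0, hφ1, frob2, frob2]
    linear_combination (X 0 ^ (p * p) * X 1 - X 0 * X 1 ^ (p * p)) * hdetC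
  -- r ≠ 0
  have hrne : r ≠ 0 := by
    rw [hr']
    intro h
    rw [sub_eq_zero] at h
    rw [X_pow_eq_monomial, X_pow_eq_monomial, show (X 1 : MvPolynomial (Fin 2) (ZMod p)) = monomial (Finsupp.single (1 : Fin 2) (1 : ℕ)) (1 : ZMod p) from rfl,
      show (X 0 : MvPolynomial (Fin 2) (ZMod p)) = monomial (Finsupp.single (0 : Fin 2) (1 : ℕ)) (1 : ZMod p) from rfl,
      monomial_mul, monomial_mul] at h
    rw [monomial_eq_monomial_iff] at h
    have h2le := hp.two_le
    rcases h with ⟨h1, -⟩ | ⟨h1, -⟩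
    · have := DFunLike.congr_fun h1 (0 : Fin 2)
      simp [Finsupp.single_apply] at this
      omega
    · simp at h1
  refine ⟨?_, hφr⟩
  have h5 : aeval (R := ZMod p) f q * r = q * r := by
    calc aeval (R := ZMod p) f q * r = aeval (R := ZMod p) f q * aeval (R := ZMod p) f r := by rw [hφr]
      _ = aeval (R := ZMod p) f (r * q) := by rw [← map_mul, mul_comm]
      _ = aeval (R := ZMod p) f (X 0 ^ (p * p) * X 1 - X 0 * X 1 ^ (p * p)) := by rw [hrq]
      _ = X 0 ^ (p * p) * X 1 - X 0 * X 1 ^ (p * p) := hφw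
      _ = r * q := hrq.symm
      _ = q * r := mul_comm _ _
  exact mul_right_cancel₀ hrne h5
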